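/- Let q and z be points of the three-dimensional Euclidean inner product space with 0 < ‖q − z‖ < R_z, and let ℓ = ‖q − z‖. Then the function p ↦ V_anchor(‖p − z‖) has gradient at q equal to k_z·tan(ℓ·π/(2R_z))·(q − z)/ℓ; equivalently, the anchoring force f_anchor(q, z, R_z) = −k_z·tan(ℓ·π/(2R_z))·(q − z)/ℓ equals the negative gradient of this function at q. -/

import Mathlib

open Real

/-- V_anchor(ℓ) = −k_z·(2R_z/π)·log(cos(ℓ·π/(2R_z))). -/
noncomputable def Vanchor (kz Rz ℓ : ℝ) : ℝ :=
  -kz * (2 * Rz / π) * Real.log (Real.cos (ℓ * π / (2 * Rz)))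

/-- The anchoring force f_anchor(q,z,R_z) = −k_z·tan(ℓπ/(2R_z))·(q−z)/ℓ with ℓ = ‖q−z‖. -/
noncomputable def fAnchor (kz Rz : ℝ) (q z : EuclideanSpace ℝ (Fin 3)) :
    EuclideanSpace ℝ (Fin 3) :=
  (-(kz * Real.tan (‖q - z‖ * π / (2 * Rz))) / ‖q - z‖) • (q - z)

lemma hasDerivAt_Vanchor (kz Rz : ℝ) (hR : 0 < Rz) {ℓ : ℝ} (h0 : 0 < ℓ) (h1 : ℓ < Rz) :
    HasDerivAt (Vanchor kz Rz) (kz * Real.tan (ℓ * π / (2 * Rz))) ℓ := by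
  have hu1 : 0 < ℓ * π / (2 * Rz) := by positivity
  have hu2 : ℓ * π / (2 * Rz) < π / 2 := by
    rw [div_lt_div_iff₀ (by positivity) (by norm_num)]
    have := Real.pi_pos
    nlinarith
  have hcos : 0 < Real.cos (ℓ * π / (2 * Rz)) :=
    Real.cos_pos_of_mem_Ioo ⟨by linarith, hu2⟩
  have harg : HasDerivAt (fun x : ℝ => x * π / (2 * Rz)) (π / (2 * Rz)) ℓ := by
    simpa using ((hasDerivAt_id ℓ).mul_const π).div_const (2 * Rz)
  have hc : HasDerivAt (fun x : ℝ => Real.cos (x * π / (2 * Rz)))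
      (-Real.sin (ℓ * π / (2 * Rz)) * (π / (2 * Rz))) ℓ :=
    (Real.hasDerivAt_cos _).comp ℓ harg
  have hlog := (hc.log hcos.ne').const_mul (-kz * (2 * Rz / π))
  refine hlog.congr_deriv ?_
  rw [Real.tan_eq_sin_div_cos]
  have hπ := Real.pi_pos
  field_simp

theorem gradient_Vanchor (kz Rz : ℝ) (hk : 0 < kz) (hR : 0 < Rz)
    (q z : EuclideanSpace ℝ (Fin 3)) (h0 : 0 < ‖q - z‖) (h1 : ‖q - z‖ < Rz) :
    gradient (fun p => Vanchor kz Rz ‖p - z‖) q =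
      ((kz * Real.tan (‖q - z‖ * π / (2 * Rz))) / ‖q - z‖) • (q - z) ∧
    fAnchor kz Rz q z = -gradient (fun p => Vanchor kz Rz ‖p - z‖) q := by
  set ℓ := ‖q - z‖ with hℓ
  set T := kz * Real.tan (ℓ * π / (2 * Rz)) with hT
  have hV := hasDerivAt_Vanchor kz Rz hR h0 h1
  have hsq : Real.sqrt (ℓ ^ 2) = ℓ := Real.sqrt_sq h0.le
  have hV' : HasDerivAt (Vanchor kz Rz) T (Real.sqrt (ℓ ^ 2)) := by rwa [hsq]
  have hsqrt : HasDerivAt Real.sqrt (1 / (2 * Real.sqrt (ℓ ^ 2))) (ℓ ^ 2) :=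
    Real.hasDerivAt_sqrt (by positivity)
  have hF : HasDerivAt (fun s => Vanchor kz Rz (Real.sqrt s))
      (T * (1 / (2 * Real.sqrt (ℓ ^ 2)))) (ℓ ^ 2) := hV'.comp _ hsqrt
  have hU : HasFDerivAt (fun p : EuclideanSpace ℝ (Fin 3) => ‖p - z‖ ^ 2)
      (2 • (innerSL ℝ (q - z))) q := by
    have := ((hasFDerivAt_id q).sub_const z).norm_sq
    simpa using this
  have hcomp : HasFDerivAt (fun p : EuclideanSpace ℝ (Fin 3) => Vanchor kz Rz ‖p - z‖)
      ((T * (1 / (2 * Real.sqrt (ℓ ^ 2)))) • (2 • (innerSL ℝ (q - z)))) q := by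
    have hfun : (fun p : EuclideanSpace ℝ (Fin 3) => Vanchor kz Rz ‖p - z‖) =
        (fun s => Vanchor kz Rz (Real.sqrt s)) ∘ (fun p => ‖p - z‖ ^ 2) := by
      funext p
      simp [Function.comp, Real.sqrt_sq (norm_nonneg (p - z))]
    rw [hfun]
    exact hF.comp_hasFDerivAt q hU
  have hgrad : HasGradientAt (fun p : EuclideanSpace ℝ (Fin 3) => Vanchor kz Rz ‖p - z‖)
      ((T / ℓ) • (q - z)) q := by
    rw [hasGradientAt_iff_hasFDerivAt]
    refine hcomp.congr_fderiv ?_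
    ext y
    simp only [ContinuousLinearMap.smul_apply, InnerProductSpace.toDual_apply_apply,
      innerSL_apply_apply, hsq, real_inner_smul_left, two_smul, ContinuousLinearMap.add_apply]
    field_simp
    rw [smul_eq_mul, ← mul_assoc, mul_div_assoc', mul_comm 2 ℓ, mul_div_mul_left _ _ h0.ne']
    ring
  have hg := hgrad.gradient
  refine ⟨hg, ?_⟩
  rw [hg, fAnchor, ← hℓ, ← hT, neg_div, neg_smul]
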